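/- Let Θ = (Θ₁,…,Θₙ) be a random vector of nonnegative random variables with E[Θ₁] < ∞, let λ₁,…,λₙ > 0, and let X = (X₁,…,Xₙ) be a random vector of ℕ-valued random variables whose joint probability mass function is the mixed Poisson distribution f_X(x₁,…,xₙ) = E[∏_{i=1}^n e^{−λ_iΘ_i} (λ_iΘ_i)^{x_i} / x_i!] for (x₁,…,xₙ) ∈ ℕⁿ. Set S = X₁+⋯+Xₙ. Then for every t ∈ [0,1], ∑_{k=0}^∞ t^k · E[X₁ · 1_{\{S=k\}}] = λ₁ · t · E[Θ₁ · ∏_{i=1}^n e^{λ_iΘ_i(t−1)}]. -/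

import Mathlib

open MeasureTheory ProbabilityTheory

open scoped ENNReal NNReal

private lemma exp_eq_tsum_real (r : ℝ) : Real.exp r = ∑' n : ℕ, r ^ n / n.factorial := by
  rw [Real.exp_eq_exp_ℝ, NormedSpace.exp_eq_tsum_div]

private lemma succ_term_eq (r : ℝ) (m : ℕ) :
    ((m + 1 : ℕ) : ℝ) * r ^ (m + 1) / ((m + 1).factorial : ℝ)
      = r * (r ^ m / (m.factorial : ℝ)) := by
  have h1 : ((m : ℝ) + 1) ≠ 0 := by positivity
  have h2 : (m.factorial : ℝ) ≠ 0 := Nat.cast_ne_zero.2 m.factorial_ne_zero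
  rw [Nat.factorial_succ]
  push_cast
  field_simp
  ring

private lemma summable_mul_pow_div_factorial (r : ℝ) :
    Summable (fun m : ℕ => (m : ℝ) * r ^ m / (m.factorial : ℝ)) := by
  rw [← summable_nat_add_iff 1]
  have : (fun m : ℕ => ((m + 1 : ℕ) : ℝ) * r ^ (m + 1) / ((m + 1).factorial : ℝ))
      = fun m : ℕ => r * (r ^ m / (m.factorial : ℝ)) := funext fun m => succ_term_eq r m
  exact this ▸ (Real.summable_pow_div_factorial r).mul_left r

private lemma tsum_mul_pow_div_factorial (r : ℝ) :
    ∑' m : ℕ, (m : ℝ) * r ^ m / (m.factorial : ℝ) = r * Real.exp r := by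
  rw [(summable_mul_pow_div_factorial r).tsum_eq_zero_add]
  have heq : ∀ m : ℕ, ((m + 1 : ℕ) : ℝ) * r ^ (m + 1) / ((m + 1).factorial : ℝ)
      = r * (r ^ m / (m.factorial : ℝ)) := succ_term_eq r
  simp only [heq, Nat.cast_zero, zero_mul, zero_div, zero_add]
  rw [tsum_mul_left, ← exp_eq_tsum_real]

private lemma tsum_poisson_ofReal {a t : ℝ} (ha : 0 ≤ a) (ht : 0 ≤ t) :
    ∑' m : ℕ, ENNReal.ofReal (t ^ m * (Real.exp (-a) * a ^ m / (m.factorial : ℝ)))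
      = ENNReal.ofReal (Real.exp (a * (t - 1))) := by
  have hterm : ∀ m : ℕ, t ^ m * (Real.exp (-a) * a ^ m / (m.factorial : ℝ))
      = Real.exp (-a) * ((t * a) ^ m / (m.factorial : ℝ)) := by
    intro m; rw [mul_pow]; ring
  have hnn : ∀ m : ℕ, 0 ≤ t ^ m * (Real.exp (-a) * a ^ m / (m.factorial : ℝ)) := by
    intro m
    exact mul_nonneg (pow_nonneg ht _) (div_nonneg
      (mul_nonneg (Real.exp_pos _).le (pow_nonneg ha _)) (Nat.cast_nonneg _))
  have hsum : Summable (fun m : ℕ => t ^ m * (Real.exp (-a) * a ^ m / (m.factorial : ℝ))) := by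
    have := (Real.summable_pow_div_factorial (t * a)).mul_left (Real.exp (-a))
    simpa [← hterm] using this
  rw [← ENNReal.ofReal_tsum_of_nonneg hnn hsum]
  congr 1
  simp only [hterm]
  rw [tsum_mul_left, ← exp_eq_tsum_real, ← Real.exp_add]
  congr 1
  ring

private lemma tsum_poisson_ofReal_mul {a t : ℝ} (ha : 0 ≤ a) (ht : 0 ≤ t) :
    ∑' m : ℕ, (m : ℝ≥0∞) * ENNReal.ofReal (t ^ m * (Real.exp (-a) * a ^ m / (m.factorial : ℝ)))
      = ENNReal.ofReal (a * t * Real.exp (a * (t - 1))) := by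
  have hnn : ∀ m : ℕ, 0 ≤ t ^ m * (Real.exp (-a) * a ^ m / (m.factorial : ℝ)) := by
    intro m
    exact mul_nonneg (pow_nonneg ht _) (div_nonneg
      (mul_nonneg (Real.exp_pos _).le (pow_nonneg ha _)) (Nat.cast_nonneg _))
  have hterm : ∀ m : ℕ, (m : ℝ≥0∞) * ENNReal.ofReal (t ^ m * (Real.exp (-a) * a ^ m / (m.factorial : ℝ)))
      = ENNReal.ofReal ((m : ℝ) * (t ^ m * (Real.exp (-a) * a ^ m / (m.factorial : ℝ)))) := by
    intro m
    rw [ENNReal.ofReal_mul (Nat.cast_nonneg m), ENNReal.ofReal_natCast]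
  have hterm2 : ∀ m : ℕ, (m : ℝ) * (t ^ m * (Real.exp (-a) * a ^ m / (m.factorial : ℝ)))
      = Real.exp (-a) * ((m : ℝ) * (t * a) ^ m / (m.factorial : ℝ)) := by
    intro m; rw [mul_pow]; ring
  have hnn2 : ∀ m : ℕ, 0 ≤ (m : ℝ) * (t ^ m * (Real.exp (-a) * a ^ m / (m.factorial : ℝ))) :=
    fun m => mul_nonneg (Nat.cast_nonneg _) (hnn m)
  have hsum : Summable (fun m : ℕ => (m : ℝ) * (t ^ m * (Real.exp (-a) * a ^ m / (m.factorial : ℝ)))) := by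
    have h := (summable_mul_pow_div_factorial (t * a)).mul_left (Real.exp (-a))
    exact h.congr fun m => (hterm2 m).symm
  simp only [hterm]
  rw [← ENNReal.ofReal_tsum_of_nonneg hnn2 hsum]
  congr 1
  simp only [hterm2]
  rw [tsum_mul_left, tsum_mul_pow_div_factorial,
    show a * (t - 1) = -a + t * a by ring, Real.exp_add]
  ring

private lemma tsum_pi_prod : ∀ (N : ℕ) (F : Fin N → ℕ → ℝ≥0∞),
    ∑' x : Fin N → ℕ, ∏ i, F i (x i) = ∏ i, ∑' m, F i m := by
  intro N
  induction N with
  | zero =>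
    intro F
    simp only [Finset.univ_eq_empty, Finset.prod_empty]
    exact tsum_eq_single (fun i => i.elim0) (fun b hb => absurd (Subsingleton.elim b _) hb)
  | succ N ih =>
    intro F
    rw [← Equiv.tsum_eq (Fin.consEquiv (fun _ : Fin (N + 1) => ℕ)) (fun x => ∏ i, F i (x i)),
      ENNReal.tsum_prod']
    have hsplit : ∀ (a : ℕ) (b : Fin N → ℕ),
        (∏ i, F i ((Fin.consEquiv (fun _ : Fin (N + 1) => ℕ)) (a, b) i))
          = F 0 a * ∏ i : Fin N, F i.succ (b i) := by
      intro a b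
      simp only [Fin.consEquiv_apply]
      rw [Fin.prod_univ_succ]
      simp [Fin.cons_zero, Fin.cons_succ]
    simp_rw [hsplit, ENNReal.tsum_mul_left, ENNReal.tsum_mul_right]
    rw [ih (fun i => F i.succ), Fin.prod_univ_succ]

/-- Pointwise evaluation of the big sum. -/
private lemma pointwise_sum (n : ℕ) (a : Fin (n + 1) → ℝ) (han : ∀ i, 0 ≤ a i)
    {t : ℝ} (ht0 : 0 ≤ t) :
    ∑' x : Fin (n + 1) → ℕ,
        (ENNReal.ofReal (t ^ (∑ i, x i)) * ((x 0 : ℕ) : ℝ≥0∞))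
          * ENNReal.ofReal (∏ i, (Real.exp (-(a i)) * (a i) ^ (x i) / ((x i).factorial : ℝ)))
      = ENNReal.ofReal ((a 0 * t) * ∏ i, Real.exp (a i * (t - 1))) := by
  set G : Fin (n + 1) → ℕ → ℝ≥0∞ := fun i m =>
    (if i = 0 then (m : ℝ≥0∞) else 1)
      * ENNReal.ofReal (t ^ m * (Real.exp (-(a i)) * (a i) ^ m / (m.factorial : ℝ))) with hG
  have hq_nn : ∀ (i : Fin (n + 1)) (m : ℕ),
      0 ≤ t ^ m * (Real.exp (-(a i)) * (a i) ^ m / (m.factorial : ℝ)) := by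
    intro i m
    exact mul_nonneg (pow_nonneg ht0 _) (div_nonneg
      (mul_nonneg (Real.exp_pos _).le (pow_nonneg (han i) _)) (Nat.cast_nonneg _))
  have hterm : ∀ x : Fin (n + 1) → ℕ,
      (ENNReal.ofReal (t ^ (∑ i, x i)) * ((x 0 : ℕ) : ℝ≥0∞))
          * ENNReal.ofReal (∏ i, (Real.exp (-(a i)) * (a i) ^ (x i) / ((x i).factorial : ℝ)))
        = ∏ i, G i (x i) := by
    intro x
    rw [hG]
    simp only []
    rw [Finset.prod_mul_distrib]
    rw [Fintype.prod_ite_eq' (0 : Fin (n + 1)) (fun j => ((x j : ℕ) : ℝ≥0∞))]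
    rw [← ENNReal.ofReal_prod_of_nonneg (fun i _ => hq_nn i (x i))]
    have h1 : ∏ i, (t ^ (x i) * (Real.exp (-(a i)) * (a i) ^ (x i) / ((x i).factorial : ℝ)))
        = t ^ (∑ i, x i) * ∏ i, (Real.exp (-(a i)) * (a i) ^ (x i) / ((x i).factorial : ℝ)) := by
      rw [Finset.prod_mul_distrib, Finset.prod_pow_eq_pow_sum]
    rw [h1, ENNReal.ofReal_mul (pow_nonneg ht0 _)]
    ring
  calc ∑' x : Fin (n + 1) → ℕ,
        (ENNReal.ofReal (t ^ (∑ i, x i)) * ((x 0 : ℕ) : ℝ≥0∞))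
          * ENNReal.ofReal (∏ i, (Real.exp (-(a i)) * (a i) ^ (x i) / ((x i).factorial : ℝ)))
      = ∑' x : Fin (n + 1) → ℕ, ∏ i, G i (x i) := tsum_congr hterm
    _ = ∏ i, ∑' m, G i m := tsum_pi_prod (n + 1) G
    _ = ∏ i, ENNReal.ofReal ((if i = 0 then a 0 * t else 1) * Real.exp (a i * (t - 1))) := by
        refine Finset.prod_congr rfl fun i _ => ?_
        by_cases h : i = 0
        · subst h
          simp only [hG, eq_self_iff_true, if_true]
          exact tsum_poisson_ofReal_mul (han 0) ht0
        · simp only [hG, if_neg h, one_mul]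
          exact tsum_poisson_ofReal (han i) ht0
    _ = ENNReal.ofReal (∏ i, ((if i = 0 then a 0 * t else 1) * Real.exp (a i * (t - 1)))) := by
        rw [ENNReal.ofReal_prod_of_nonneg]
        intro i _
        refine mul_nonneg ?_ (Real.exp_pos _).le
        by_cases h : i = 0 <;> simp [h, mul_nonneg (han 0) ht0]
    _ = ENNReal.ofReal ((a 0 * t) * ∏ i, Real.exp (a i * (t - 1))) := by
        congr 1
        rw [Finset.prod_mul_distrib,
          Fintype.prod_ite_eq' (0 : Fin (n + 1)) (fun _ => a 0 * t)]

/-- For a multivariate mixed Poisson random vector `X = (X₁,…,Xₙ)` with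
nonnegative mixing vector `Θ = (Θ₁,…,Θₙ)` (with `E[Θ₁] < ∞`) and intensities `λ_i > 0`,
i.e. with joint pmf `f_X(x) = E[∏_i e^{-λ_iΘ_i}(λ_iΘ_i)^{x_i}/x_i!]`, and `S = X₁+⋯+Xₙ`,
for every `t ∈ [0,1]`:
`∑_{k=0}^∞ t^k E[X₁ · 1_{S=k}] = λ₁ t E[Θ₁ ∏_{i=1}^n e^{λ_iΘ_i(t-1)}]`. -/
theorem ogf_expected_allocation_mixed_poisson
    {Ω Ω' : Type*} [MeasurableSpace Ω] [MeasurableSpace Ω']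
    (μ : Measure Ω) (μ' : Measure Ω')
    [IsProbabilityMeasure μ] [IsProbabilityMeasure μ']
    (n : ℕ) (Θ : Fin (n + 1) → Ω' → ℝ)
    (hΘmeas : ∀ i, Measurable (Θ i))
    (hΘnn : ∀ i ω', 0 ≤ Θ i ω')
    (hΘint : Integrable (fun ω' => Θ 0 ω') μ')
    (lam : Fin (n + 1) → ℝ) (hlam : ∀ i, 0 < lam i)
    (X : Fin (n + 1) → Ω → ℕ) (hX : ∀ i, Measurable (X i))
    (hjoint : ∀ x : Fin (n + 1) → ℕ,
      (μ {ω | ∀ i, X i ω = x i}).toReal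
        = ∫ ω', ∏ i, (Real.exp (-(lam i * Θ i ω')) * (lam i * Θ i ω') ^ (x i)
            / (Nat.factorial (x i))) ∂μ')
    (S : Ω → ℕ) (hS : ∀ ω, S ω = ∑ i, X i ω)
    (t : ℝ) (ht : t ∈ Set.Icc (0 : ℝ) 1) :
    ∑' k : ℕ, t ^ k * ∫ ω in {ω | S ω = k}, (X 0 ω : ℝ) ∂μ
      = lam 0 * t * ∫ ω', Θ 0 ω' * ∏ i, Real.exp (lam i * Θ i ω' * (t - 1)) ∂μ' := by
  obtain ⟨ht0, ht1⟩ := ht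
  set A : (Fin (n + 1) → ℕ) → Set Ω := fun x => {ω | ∀ i, X i ω = x i} with hA
  set p : (Fin (n + 1) → ℕ) → Ω' → ℝ := fun x ω' =>
    ∏ i, (Real.exp (-(lam i * Θ i ω')) * (lam i * Θ i ω') ^ (x i)
      / (Nat.factorial (x i))) with hp
  have ha_nn : ∀ (i : Fin (n + 1)) ω', 0 ≤ lam i * Θ i ω' :=
    fun i ω' => mul_nonneg (hlam i).le (hΘnn i ω')
  have hp_nn : ∀ x ω', 0 ≤ p x ω' := by
    intro x ω'
    refine Finset.prod_nonneg fun i _ => ?_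
    exact div_nonneg (mul_nonneg (Real.exp_pos _).le (pow_nonneg (ha_nn i ω') _))
      (Nat.cast_nonneg _)
  have hp_le_one : ∀ x ω', p x ω' ≤ 1 := by
    intro x ω'
    refine Finset.prod_le_one (fun i _ => div_nonneg
      (mul_nonneg (Real.exp_pos _).le (pow_nonneg (ha_nn i ω') _)) (Nat.cast_nonneg _))
      (fun i _ => ?_)
    rw [mul_div_assoc]
    calc Real.exp (-(lam i * Θ i ω')) * ((lam i * Θ i ω') ^ (x i) / (Nat.factorial (x i) : ℝ))
        ≤ Real.exp (-(lam i * Θ i ω')) * Real.exp (lam i * Θ i ω') :=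
          mul_le_mul_of_nonneg_left
            (Real.pow_div_factorial_le_exp _ (ha_nn i ω') (x i)) (Real.exp_pos _).le
      _ = 1 := by rw [← Real.exp_add, neg_add_cancel, Real.exp_zero]
  have hp_meas : ∀ x, Measurable (p x) := by
    intro x
    refine Finset.measurable_prod _ fun i _ => ?_
    have hm : Measurable fun ω' => lam i * Θ i ω' := (hΘmeas i).const_mul _
    exact (hm.neg.exp.mul (hm.pow_const _)).div_const _
  have hA_meas : ∀ x, MeasurableSet (A x) := by
    intro x
    have hAe : A x = ⋂ i, X i ⁻¹' {x i} := by
      ext ω; simp [hA, Set.mem_iInter]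
    rw [hAe]
    exact MeasurableSet.iInter fun i => (hX i) (measurableSet_singleton _)
  have hμA : ∀ x, μ (A x) = ∫⁻ ω', ENNReal.ofReal (p x ω') ∂μ' := by
    intro x
    have h1 : (μ (A x)).toReal = ∫ ω', p x ω' ∂μ' := hjoint x
    have h2 : ∫ ω', p x ω' ∂μ' = (∫⁻ ω', ENNReal.ofReal (p x ω') ∂μ').toReal :=
      integral_eq_lintegral_of_nonneg_ae (ae_of_all _ (hp_nn x))
        (hp_meas x).aestronglyMeasurable
    have h3 : ∫⁻ ω', ENNReal.ofReal (p x ω') ∂μ' ≤ 1 := by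
      calc ∫⁻ ω', ENNReal.ofReal (p x ω') ∂μ' ≤ ∫⁻ _, 1 ∂μ' := by
            refine lintegral_mono fun ω' => ?_
            simpa using ENNReal.ofReal_le_ofReal (hp_le_one x ω')
        _ = 1 := by simp
    have hfin : ∫⁻ ω', ENNReal.ofReal (p x ω') ∂μ' ≠ ∞ :=
      (h3.trans_lt ENNReal.one_lt_top).ne
    exact (ENNReal.toReal_eq_toReal_iff' (measure_ne_top μ _) hfin).mp (h1.trans h2)
  have hSmeas : Measurable S := by
    have h : S = fun ω => ∑ i, X i ω := funext hS
    rw [h]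
    exact Finset.measurable_sum _ fun i _ => hX i
  have hSk_meas : ∀ k : ℕ, MeasurableSet {ω | S ω = k} :=
    fun k => hSmeas (measurableSet_singleton k)
  -- Step A: decompose the set integral over the partition {X = x}
  have hL : ∀ k : ℕ, ∫⁻ ω in {ω | S ω = k}, ((X 0 ω : ℕ) : ℝ≥0∞) ∂μ
      = ∑' x : {x : Fin (n + 1) → ℕ // ∑ i, x i = k},
          ((x.1 0 : ℕ) : ℝ≥0∞) * μ (A x.1) := by
    intro k
    have hunion : {ω | S ω = k}
        = ⋃ x : {x : Fin (n + 1) → ℕ // ∑ i, x i = k}, A x.1 := by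
      ext ω
      simp only [Set.mem_setOf_eq, Set.mem_iUnion]
      constructor
      · intro h
        refine ⟨⟨fun i => X i ω, ?_⟩, fun i => rfl⟩
        rw [← hS ω]; exact h
      · rintro ⟨⟨x, hx⟩, hmem⟩
        rw [hS ω]
        calc ∑ i, X i ω = ∑ i, x i := Finset.sum_congr rfl fun i _ => hmem i
          _ = k := hx
    have hdisj : Pairwise (Function.onFun Disjoint
        fun x : {x : Fin (n + 1) → ℕ // ∑ i, x i = k} => A x.1) := by
      intro x y hxy
      refine Set.disjoint_left.mpr fun ω hωx hωy => ?_
      exact hxy (Subtype.ext (funext fun i => (hωx i).symm.trans (hωy i)))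
    rw [hunion, lintegral_iUnion (fun x : {x : Fin (n + 1) → ℕ // ∑ i, x i = k} => hA_meas x.1) hdisj]
    refine tsum_congr fun x => ?_
    rw [setLIntegral_congr_fun (hA_meas x.1)
      (fun ω (hω : ∀ i, X i ω = x.1 i) => by rw [hω 0]),
      setLIntegral_const]
  set E : ℝ≥0∞ := ∑' k : ℕ, ENNReal.ofReal (t ^ k)
      * ∫⁻ ω in {ω | S ω = k}, ((X 0 ω : ℕ) : ℝ≥0∞) ∂μ with hE
  -- Step B: E as a sum over all x
  have hE2 : E = ∑' x : Fin (n + 1) → ℕ,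
      (ENNReal.ofReal (t ^ (∑ i, x i)) * ((x 0 : ℕ) : ℝ≥0∞)) * μ (A x) := by
    rw [hE]
    calc ∑' k : ℕ, ENNReal.ofReal (t ^ k)
          * ∫⁻ ω in {ω | S ω = k}, ((X 0 ω : ℕ) : ℝ≥0∞) ∂μ
        = ∑' (k : ℕ) (x : {x : Fin (n + 1) → ℕ // ∑ i, x i = k}),
            (ENNReal.ofReal (t ^ (∑ i, x.1 i)) * ((x.1 0 : ℕ) : ℝ≥0∞)) * μ (A x.1) := by
          refine tsum_congr fun k => ?_
          rw [hL k, ← ENNReal.tsum_mul_left]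
          refine tsum_congr fun x => ?_
          rw [x.2, mul_assoc]
      _ = ∑' (σ : Σ k : ℕ, {x : Fin (n + 1) → ℕ // ∑ i, x i = k}),
            (ENNReal.ofReal (t ^ (∑ i, σ.2.1 i)) * ((σ.2.1 0 : ℕ) : ℝ≥0∞)) * μ (A σ.2.1) :=
          (ENNReal.tsum_sigma _).symm
      _ = ∑' x : Fin (n + 1) → ℕ,
            (ENNReal.ofReal (t ^ (∑ i, x i)) * ((x 0 : ℕ) : ℝ≥0∞)) * μ (A x) :=
          Equiv.tsum_eq (Equiv.sigmaFiberEquiv fun x : Fin (n + 1) → ℕ => ∑ i, x i)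
            (fun x => (ENNReal.ofReal (t ^ (∑ i, x i)) * ((x 0 : ℕ) : ℝ≥0∞)) * μ (A x))
  -- Step C: swap sum and integral
  have hE3 : E = ∫⁻ ω', ∑' x : Fin (n + 1) → ℕ,
      (ENNReal.ofReal (t ^ (∑ i, x i)) * ((x 0 : ℕ) : ℝ≥0∞))
        * ENNReal.ofReal (p x ω') ∂μ' := by
    rw [hE2]
    have hconst : ∀ x : Fin (n + 1) → ℕ,
        (ENNReal.ofReal (t ^ (∑ i, x i)) * ((x 0 : ℕ) : ℝ≥0∞)) ≠ ∞ :=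
      fun x => ENNReal.mul_ne_top ENNReal.ofReal_ne_top (ENNReal.natCast_ne_top _)
    have hstep : ∀ x : Fin (n + 1) → ℕ,
        (ENNReal.ofReal (t ^ (∑ i, x i)) * ((x 0 : ℕ) : ℝ≥0∞)) * μ (A x)
          = ∫⁻ ω', (ENNReal.ofReal (t ^ (∑ i, x i)) * ((x 0 : ℕ) : ℝ≥0∞))
              * ENNReal.ofReal (p x ω') ∂μ' := by
      intro x
      rw [hμA x, ← lintegral_const_mul' _ _ (hconst x)]
    simp_rw [hstep]
    rw [← lintegral_tsum]
    intro x
    exact (((hp_meas x).ennreal_ofReal).const_mul _).aemeasurable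
  -- Step D: pointwise evaluation
  have hpt : ∀ ω', ∑' x : Fin (n + 1) → ℕ,
      (ENNReal.ofReal (t ^ (∑ i, x i)) * ((x 0 : ℕ) : ℝ≥0∞)) * ENNReal.ofReal (p x ω')
      = ENNReal.ofReal (lam 0 * t)
        * ENNReal.ofReal (Θ 0 ω' * ∏ i, Real.exp (lam i * Θ i ω' * (t - 1))) := by
    intro ω'
    have := pointwise_sum n (fun i => lam i * Θ i ω') (fun i => ha_nn i ω') ht0
    rw [hp]
    simp only []
    rw [this]
    rw [← ENNReal.ofReal_mul (mul_nonneg (hlam 0).le ht0)]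
    congr 1
    ring
  -- the ennreal value of the RHS integral
  set I : ℝ≥0∞ := ∫⁻ ω', ENNReal.ofReal
      (Θ 0 ω' * ∏ i, Real.exp (lam i * Θ i ω' * (t - 1))) ∂μ' with hI
  have hE4 : E = ENNReal.ofReal (lam 0 * t) * I := by
    rw [hE3]
    rw [lintegral_congr hpt, hI, lintegral_const_mul' _ _ ENNReal.ofReal_ne_top]
  have hI_fin : I ≠ ∞ := by
    have hle : ∀ ω', ENNReal.ofReal
        (Θ 0 ω' * ∏ i, Real.exp (lam i * Θ i ω' * (t - 1))) ≤ (‖Θ 0 ω'‖₊ : ℝ≥0∞) := by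
      intro ω'
      have hprod : ∏ i, Real.exp (lam i * Θ i ω' * (t - 1)) ≤ 1 := by
        refine Finset.prod_le_one (fun i _ => (Real.exp_pos _).le) (fun i _ => ?_)
        rw [Real.exp_le_one_iff]
        exact mul_nonpos_iff.mpr (Or.inl ⟨ha_nn i ω', sub_nonpos.mpr ht1⟩)
      calc ENNReal.ofReal (Θ 0 ω' * ∏ i, Real.exp (lam i * Θ i ω' * (t - 1)))
          ≤ ENNReal.ofReal (Θ 0 ω') :=
            ENNReal.ofReal_le_ofReal (mul_le_of_le_one_right (hΘnn 0 ω') hprod)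
        _ ≤ (‖Θ 0 ω'‖₊ : ℝ≥0∞) := Real.ofReal_le_enorm _
    exact ((lintegral_mono hle).trans_lt hΘint.2).ne
  have hE_fin : E ≠ ∞ := by
    rw [hE4]
    exact ENNReal.mul_ne_top ENNReal.ofReal_ne_top hI_fin
  -- RHS conversion
  have hmeasRHS : Measurable fun ω' => Θ 0 ω' * ∏ i, Real.exp (lam i * Θ i ω' * (t - 1)) := by
    refine (hΘmeas 0).mul (Finset.measurable_prod _ fun i _ => ?_)
    exact (((hΘmeas i).const_mul (lam i)).mul_const (t - 1)).exp
  have hRHS : ∫ ω', Θ 0 ω' * ∏ i, Real.exp (lam i * Θ i ω' * (t - 1)) ∂μ' = I.toReal := by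
    rw [hI]
    exact integral_eq_lintegral_of_nonneg_ae
      (ae_of_all _ fun ω' => mul_nonneg (hΘnn 0 ω')
        (Finset.prod_nonneg fun i _ => (Real.exp_pos _).le))
      hmeasRHS.aestronglyMeasurable
  -- LHS conversion
  have hLfin : ∀ k : ℕ, ∫⁻ ω in {ω | S ω = k}, ((X 0 ω : ℕ) : ℝ≥0∞) ∂μ ≠ ∞ := by
    intro k
    have hb : ∫⁻ ω in {ω | S ω = k}, ((X 0 ω : ℕ) : ℝ≥0∞) ∂μ
        ≤ ∫⁻ _ in {ω | S ω = k}, (k : ℝ≥0∞) ∂μ := by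
      refine setLIntegral_mono' (hSk_meas k) fun ω hω => ?_
      have hle : X 0 ω ≤ k := by
        have h1 : X 0 ω ≤ ∑ i, X i ω :=
          Finset.single_le_sum (f := fun i => X i ω) (fun i _ => Nat.zero_le _)
            (Finset.mem_univ 0)
        rw [← hS ω] at h1
        exact h1.trans_eq hω
      exact_mod_cast Nat.cast_le.mpr hle
    rw [setLIntegral_const] at hb
    refine (hb.trans_lt ?_).ne
    exact ENNReal.mul_lt_top (ENNReal.natCast_lt_top k) (measure_lt_top μ _)
  have hXcast_meas : Measurable fun ω => ((X 0 ω : ℕ) : ℝ) :=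
    measurable_from_top.comp (hX 0)
  have hterm_eq : ∀ k : ℕ, t ^ k * ∫ ω in {ω | S ω = k}, (X 0 ω : ℝ) ∂μ
      = (ENNReal.ofReal (t ^ k)
          * ∫⁻ ω in {ω | S ω = k}, ((X 0 ω : ℕ) : ℝ≥0∞) ∂μ).toReal := by
    intro k
    have h1 : ∫ ω in {ω | S ω = k}, (X 0 ω : ℝ) ∂μ
        = (∫⁻ ω in {ω | S ω = k}, ((X 0 ω : ℕ) : ℝ≥0∞) ∂μ).toReal := by
      rw [integral_eq_lintegral_of_nonneg_ae (ae_of_all _ fun ω => Nat.cast_nonneg _)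
        hXcast_meas.aestronglyMeasurable]
      congr 1
      exact lintegral_congr fun ω => ENNReal.ofReal_natCast _
    rw [h1, ENNReal.toReal_mul, ENNReal.toReal_ofReal (pow_nonneg ht0 _)]
  calc ∑' k : ℕ, t ^ k * ∫ ω in {ω | S ω = k}, (X 0 ω : ℝ) ∂μ
      = ∑' k : ℕ, (ENNReal.ofReal (t ^ k)
          * ∫⁻ ω in {ω | S ω = k}, ((X 0 ω : ℕ) : ℝ≥0∞) ∂μ).toReal :=
        tsum_congr hterm_eq
    _ = E.toReal := by
        rw [hE]
        exact (ENNReal.tsum_toReal_eq fun k =>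
          ENNReal.mul_ne_top ENNReal.ofReal_ne_top (hLfin k)).symm
    _ = lam 0 * t * ∫ ω', Θ 0 ω' * ∏ i, Real.exp (lam i * Θ i ω' * (t - 1)) ∂μ' := by
        rw [hE4, ENNReal.toReal_mul, ENNReal.toReal_ofReal (mul_nonneg (hlam 0).le ht0),
          hRHS]
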